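/- Let n ≥ 2, a_0, …, a_n real, a ∈ (−1,1), r > 0 with 2rn² ≤ 1, and suppose n < 1/(2·√(1−a²)). Let u_k(a) be the Clenshaw sequence of p at a (u_{n+1}(a)=0, u_n(a)=a_n, u_k(a)=2a·u_{k+1}(a)−u_{k+2}(a)+a_k for 1 ≤ k ≤ n−1), and let M > 0 satisfy |u_k(a)| ≤ M for 1 ≤ k ≤ n. Define e_n = 0, f_n = 0; for k = n−1 down to 1: f_k = 2r·|u_{k+1}(a)| + 2r·e_{k+1} + f_{k+1} and e_k = min(e_{k+1} + f_k, f_k/√(1−a²)); finally f_0 = r·|u_1(a)| + 2r·e_1 + f_1 and e_0 = min(e_1 + f_0, f_0/√(1−a²)). Then e_0 ≤ 2Mn²r. -/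
import Mathlib


open Finset

/-- Radius bound for the ball Clenshaw algorithm (forward error, exact arithmetic),
case `n < 1/(2√(1-a²))`: the final radius satisfies `e₀ ≤ 2Mn²r`. -/
theorem ball_clenshaw_forward_radius_small_n (n : ℕ) (hn : 2 ≤ n) (a : ℕ → ℝ)
    (c : ℝ) (hc : c ∈ Set.Ioo (-1 : ℝ) 1) (r : ℝ) (hr : 0 < r)
    (hrn : 2 * r * (n : ℝ) ^ 2 ≤ 1)
    (hncase : (n : ℝ) < 1 / (2 * Real.sqrt (1 - c ^ 2)))
    (u : ℕ → ℝ) (hun1 : u (n + 1) = 0) (hun : u n = a n)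
    (hurec : ∀ k, 1 ≤ k → k ≤ n - 1 → u k = 2 * c * u (k + 1) - u (k + 2) + a k)
    (M : ℝ) (hM : 0 < M) (hMu : ∀ k, 1 ≤ k → k ≤ n → |u k| ≤ M)
    (e f : ℕ → ℝ) (hen : e n = 0) (hfn : f n = 0)
    (href : ∀ k, 1 ≤ k → k ≤ n - 1 →
      f k = 2 * r * |u (k + 1)| + 2 * r * e (k + 1) + f (k + 1) ∧
      e k = min (e (k + 1) + f k) (f k / Real.sqrt (1 - c ^ 2)))
    (hf0 : f 0 = r * |u 1| + 2 * r * e 1 + f 1)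
    (he0 : e 0 = min (e 1 + f 0) (f 0 / Real.sqrt (1 - c ^ 2))) :
    e 0 ≤ 2 * M * (n : ℝ) ^ 2 * r := by
  have hn2 : (2:ℝ) ≤ (n:ℝ) := by exact_mod_cast hn
  have hnpos : (0:ℝ) < (n:ℝ)^2 := by positivity
  have key : ∀ m : ℕ, ∀ k : ℕ, 1 ≤ k → k + m = n →
      0 ≤ f k ∧ 0 ≤ e k ∧
      f k * (4*(n:ℝ)^2) ≤ 2*r*M * (4*(n:ℝ)^2*(m:ℝ) + (m:ℝ)^3) ∧
      e k * (4*(n:ℝ)^2) ≤ 2*r*M * (2*(n:ℝ)^2*((m:ℝ)^2+(m:ℝ)) + (m:ℝ)^4) ∧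
      4 * e k ≤ 2*r*M * (3*(m:ℝ)^2 + 2*(m:ℝ)) := by
    intro m
    induction m with
    | zero =>
      intro k hk1 hkn
      have hkeq : k = n := by omega
      subst hkeq
      refine ⟨by rw [hfn], by rw [hen], ?_, ?_, ?_⟩ <;> norm_num [hen, hfn]
    | succ m ih =>
      intro k hk1 hkn
      obtain ⟨hf', he', hfb', heb', hec'⟩ := ih (k+1) (by omega) (by omega)
      obtain ⟨hfk, hek⟩ := href k hk1 (by omega)
      have hA0 : 0 ≤ |u (k+1)| := abs_nonneg _
      have hA : |u (k+1)| ≤ M := hMu (k+1) (by omega) (by omega)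
      have hm1n : (m:ℝ) + 1 ≤ (n:ℝ) := by exact_mod_cast (by omega : m + 1 ≤ n)
      have hm0 : (0:ℝ) ≤ (m:ℝ) := Nat.cast_nonneg m
      have hfk0 : 0 ≤ f k := by
        rw [hfk]
        have h1 : (0:ℝ) ≤ 2*r*|u (k+1)| := by positivity
        have h2 : (0:ℝ) ≤ 2*r*e (k+1) := mul_nonneg (by positivity) he'
        linarith
      have hek0 : 0 ≤ e k := by
        rw [hek]
        exact le_min (by linarith) (div_nonneg hfk0 (Real.sqrt_nonneg _))
      have hfkb : f k * (4*(n:ℝ)^2) ≤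
          2*r*M * (4*(n:ℝ)^2*((m:ℝ)+1) + ((m:ℝ)+1)^3) := by
        rw [hfk]
        linarith [mul_nonneg (show (0:ℝ) ≤ M - |u (k+1)| by linarith)
            (show (0:ℝ) ≤ 8*r*(n:ℝ)^2 by positivity),
          mul_nonneg (show (0:ℝ) ≤ 1 - 2*r*(n:ℝ)^2 by linarith)
            (show (0:ℝ) ≤ 4 * e (k+1) by linarith),
          hec', hfb',
          mul_nonneg (show (0:ℝ) ≤ 2*r*M by positivity) hm0,
          (show (0:ℝ) ≤ 2*r*M by positivity)]
      have heklef : e k ≤ e (k+1) + f k := by rw [hek]; exact min_le_left _ _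
      have hekb : e k * (4*(n:ℝ)^2) ≤
          2*r*M * (2*(n:ℝ)^2*(((m:ℝ)+1)^2+((m:ℝ)+1)) + ((m:ℝ)+1)^4) := by
        linarith [mul_le_mul_of_nonneg_right heklef
            (show (0:ℝ) ≤ 4*(n:ℝ)^2 by positivity),
          heb', hfkb,
          mul_nonneg (show (0:ℝ) ≤ 2*r*M by positivity)
            (show (0:ℝ) ≤ 3*(m:ℝ)^3+3*(m:ℝ)^2+(m:ℝ) by positivity)]
      have hecb : 4 * e k ≤ 2*r*M * (3*((m:ℝ)+1)^2 + 2*((m:ℝ)+1)) := by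
        have hsq : ((m:ℝ)+1)^2 ≤ (n:ℝ)^2 := by nlinarith
        have h2 : 4 * e k * (n:ℝ)^2 ≤
            2*r*M * (3*((m:ℝ)+1)^2 + 2*((m:ℝ)+1)) * (n:ℝ)^2 := by
          linarith [hekb,
            mul_nonneg (mul_nonneg (show (0:ℝ) ≤ 2*r*M by positivity)
              (sq_nonneg ((m:ℝ)+1)))
              (show (0:ℝ) ≤ (n:ℝ)^2 - ((m:ℝ)+1)^2 by linarith)]
        exact le_of_mul_le_mul_right h2 hnpos
      refine ⟨hfk0, hek0, ?_, ?_, ?_⟩ <;> push_cast <;> linarith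
  have hcast : ((n-1 : ℕ):ℝ) = (n:ℝ) - 1 := by
    rw [Nat.cast_sub (by omega : 1 ≤ n)]; norm_num
  obtain ⟨hf1, he1, hfb1, heb1, hec1⟩ := key (n-1) 1 le_rfl (by omega)
  rw [hcast] at hfb1 heb1 hec1
  have hA1 : |u 1| ≤ M := hMu 1 le_rfl (by omega)
  have hA10 : 0 ≤ |u 1| := abs_nonneg _
  have h0 : e 0 ≤ e 1 + (r * |u 1| + 2 * r * e 1 + f 1) := by
    rw [← hf0, he0]; exact min_le_left _ _
  have hpoly : (0:ℝ) ≤ (n:ℝ)^4 + (n:ℝ)^3 - 4*(n:ℝ)^2 + 3*(n:ℝ) - 1 := by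
    nlinarith [sq_nonneg ((n:ℝ) - 2), sq_nonneg (n:ℝ)]
  have hmul : e 0 * (4*(n:ℝ)^2) ≤ (2 * M * (n:ℝ)^2 * r) * (4*(n:ℝ)^2) := by
    linarith [mul_le_mul_of_nonneg_right h0 (show (0:ℝ) ≤ 4*(n:ℝ)^2 by positivity),
      heb1, hfb1, hec1,
      mul_nonneg (show (0:ℝ) ≤ M - |u 1| by linarith)
        (show (0:ℝ) ≤ 4*r*(n:ℝ)^2 by positivity),
      mul_nonneg (show (0:ℝ) ≤ 1 - 2*r*(n:ℝ)^2 by linarith)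
        (show (0:ℝ) ≤ 4 * e 1 by linarith),
      mul_nonneg (show (0:ℝ) ≤ 2*r*M by positivity) hpoly,
      mul_nonneg (show (0:ℝ) ≤ 2*r*M by positivity) (show (0:ℝ) ≤ (n:ℝ) by positivity),
      (show (0:ℝ) ≤ 2*r*M by positivity)]
  exact le_of_mul_le_mul_right hmul (by positivity)
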